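/- Let A be a real symmetric positive semidefinite N×N matrix with tr(A) > 0. Then the smallest eigenvalue of A satisfies λ_min(A) ≥ ((N − 1)/tr(A))^{N−1} · det(A). -/

import Mathlib

open Matrix BigOperators

open Finset in
-- AM-GM, unweighted
lemma amgm {ι : Type*} (s : Finset ι) (z : ι → ℝ) (hz : ∀ i ∈ s, 0 ≤ z i) :
    ∏ i ∈ s, z i ≤ ((∑ i ∈ s, z i) / s.card) ^ s.card := by
  rcases s.eq_empty_or_nonempty with rfl | hs
  · simp
  have hn : (s.card : ℝ) ≠ 0 := by exact_mod_cast Finset.card_ne_zero_of_mem hs.choose_spec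
  have h := Real.geom_mean_le_arith_mean_weighted s (fun _ => (s.card : ℝ)⁻¹) z
    (fun i _ => by positivity) (by rw [Finset.sum_const, nsmul_eq_mul, mul_inv_cancel₀ hn]) hz
  have hprod : ∏ i ∈ s, z i ^ ((s.card : ℝ)⁻¹) = (∏ i ∈ s, z i) ^ ((s.card : ℝ)⁻¹) := by
    rw [← Real.finset_prod_rpow s z hz]
  rw [hprod] at h
  have hps : (0:ℝ) ≤ (∏ i ∈ s, z i) ^ ((s.card : ℝ)⁻¹) :=
    Real.rpow_nonneg (Finset.prod_nonneg hz) _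
  have h2 := pow_le_pow_left₀ hps h s.card
  rw [Real.rpow_inv_natCast_pow (Finset.prod_nonneg hz) (by exact_mod_cast hn)] at h2
  calc ∏ i ∈ s, z i ≤ _ := h2
    _ = ((∑ i ∈ s, z i) / s.card) ^ s.card := by
        congr 1
        rw [← Finset.mul_sum]
        field_simp


/-- The smallest eigenvalue of a real symmetric matrix, expressed as the infimum of the
Rayleigh quotient over the unit sphere (Courant–Fischer). -/
noncomputable def eigMin {m : Type} [Fintype m] (A : Matrix m m ℝ) : ℝ :=
  ⨅ v : {v : m → ℝ // v ⬝ᵥ v = 1}, v.1 ⬝ᵥ A.mulVec v.1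

/-- For a real symmetric positive semidefinite `N×N` matrix `A` with
`tr(A) > 0`, `λ_min(A) ≥ ((N−1)/tr(A))^{N−1} · det(A)`. -/
theorem stmt16 (N : ℕ) (A : Matrix (Fin N) (Fin N) ℝ) (hA : A.PosSemidef)
    (htr : 0 < A.trace) :
    (((N : ℝ) - 1) / A.trace) ^ (N - 1) * A.det ≤ eigMin A := by
  have hH := hA.1
  set μ := hH.eigenvalues with hμ
  have hμ0 : ∀ i, 0 ≤ μ i := hA.eigenvalues_nonneg
  have hN : N ≠ 0 := by
    rintro rfl
    simp [Matrix.trace] at htr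
  have hNe : Nonempty (Fin N) := ⟨⟨0, Nat.pos_of_ne_zero hN⟩⟩
  set U := (hH.eigenvectorUnitary : Matrix (Fin N) (Fin N) ℝ) with hU
  have hUstar : star U = Uᵀ := by
    rw [Matrix.star_eq_conjTranspose, Matrix.conjTranspose_eq_transpose_of_trivial]
  have hspec : A = U * Matrix.diagonal μ * star U := by
    have := hH.spectral_theorem
    simpa using this
  -- trace
  have htr_eq : A.trace = ∑ i, μ i := by
    conv_lhs => rw [hspec]
    rw [Matrix.trace_mul_cycle, Unitary.coe_star_mul_self, one_mul, Matrix.trace_diagonal]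
  -- determinant
  have hdet : A.det = ∏ i, μ i := by
    have := hH.det_eq_prod_eigenvalues
    simpa using this
  -- min eigenvalue
  obtain ⟨i₀, -, hi₀⟩ := Finset.exists_min_image Finset.univ μ Finset.univ_nonempty
  -- bound ≤ μ i₀
  have hbound : (((N : ℝ) - 1) / A.trace) ^ (N - 1) * A.det ≤ μ i₀ := by
    have hdet' : A.det = μ i₀ * ∏ j ∈ Finset.univ.erase i₀, μ j := by
      rw [hdet, ← Finset.mul_prod_erase _ _ (Finset.mem_univ i₀)]
    rcases eq_or_ne N 1 with rfl | hN1
    · have h0 : Finset.univ.erase i₀ = ∅ :=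
        Finset.eq_empty_of_forall_notMem fun j hj =>
          (Finset.ne_of_mem_erase hj) (Subsingleton.elim j i₀)
      simp only [Nat.sub_self, pow_zero, one_mul, hdet', h0, Finset.prod_empty, mul_one]
      exact le_refl _
    · have hN2 : 2 ≤ N := by omega
      have hcard : (Finset.univ.erase i₀).card = N - 1 := by
        simp [Finset.card_erase_of_mem]
      have hNR : (0:ℝ) < (N:ℝ) - 1 := by
        have : (2:ℝ) ≤ N := by exact_mod_cast hN2
        linarith
      have hcardR : ((Finset.univ.erase i₀).card : ℝ) = (N:ℝ) - 1 := by
        rw [hcard]; push_cast [Nat.cast_sub (by omega : 1 ≤ N)]; ring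
      have hsum_le : ∑ j ∈ Finset.univ.erase i₀, μ j ≤ A.trace := by
        rw [htr_eq]
        exact Finset.sum_le_sum_of_subset_of_nonneg (Finset.subset_univ _)
          (fun i _ _ => hμ0 i)
      have hprod_le : ∏ j ∈ Finset.univ.erase i₀, μ j ≤ (A.trace / ((N:ℝ)-1)) ^ (N-1) := by
        calc ∏ j ∈ Finset.univ.erase i₀, μ j
            ≤ ((∑ j ∈ Finset.univ.erase i₀, μ j) / (Finset.univ.erase i₀).card) ^ (Finset.univ.erase i₀).card :=
              amgm _ _ (fun i _ => hμ0 i)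
          _ ≤ (A.trace / ((N:ℝ)-1)) ^ (N-1) := by
              rw [hcard, Nat.cast_sub (by omega : 1 ≤ N), Nat.cast_one]
              exact pow_le_pow_left₀
                (div_nonneg (Finset.sum_nonneg fun i _ => hμ0 i) hNR.le)
                (div_le_div_of_nonneg_right hsum_le hNR.le) _
      have hct : (((N : ℝ) - 1) / A.trace) ^ (N - 1) * (A.trace / ((N:ℝ)-1)) ^ (N-1) = 1 := by
        rw [← mul_pow, div_mul_div_comm, mul_comm ((N:ℝ)-1) A.trace,
          div_self (by positivity), one_pow]
      calc (((N : ℝ) - 1) / A.trace) ^ (N - 1) * A.det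
          = (((N : ℝ) - 1) / A.trace) ^ (N - 1) * (μ i₀ * ∏ j ∈ Finset.univ.erase i₀, μ j) := by rw [hdet']
        _ ≤ (((N : ℝ) - 1) / A.trace) ^ (N - 1) * (μ i₀ * (A.trace / ((N:ℝ)-1)) ^ (N-1)) := by
            apply mul_le_mul_of_nonneg_left _ (by positivity)
            exact mul_le_mul_of_nonneg_left hprod_le (hμ0 i₀)
        _ = (((N : ℝ) - 1) / A.trace) ^ (N - 1) * (A.trace / ((N:ℝ)-1)) ^ (N-1) * μ i₀ := by ring
        _ = μ i₀ := by rw [hct, one_mul]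
  -- Rayleigh
  have hne : Nonempty {v : Fin N → ℝ // v ⬝ᵥ v = 1} := by
    refine ⟨⟨Pi.single i₀ 1, ?_⟩⟩
    simp [dotProduct, Pi.single_apply]
  refine le_trans hbound (le_ciInf fun v => ?_)
  obtain ⟨v, hv⟩ := v
  have hU1 : U * star U = 1 := Matrix.mem_unitaryGroup_iff.mp hH.eigenvectorUnitary.2
  set w := star U *ᵥ v with hw
  have hw' : w = v ᵥ* U := by rw [hw, hUstar, Matrix.mulVec_transpose]
  have hwv : w ⬝ᵥ w = 1 := by
    rw [hw, Matrix.dotProduct_mulVec, hUstar, Matrix.vecMul_transpose, ← hUstar,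
      Matrix.mulVec_mulVec, hU1, Matrix.one_mulVec, hv]
  have h1 : v ⬝ᵥ A.mulVec v = ∑ i, μ i * (w i * w i) := by
    conv_lhs => rw [hspec]
    rw [← Matrix.mulVec_mulVec, ← Matrix.mulVec_mulVec, Matrix.dotProduct_mulVec, ← hw, ← hw']
    simp only [dotProduct, Matrix.mulVec_diagonal]
    exact Finset.sum_congr rfl fun i _ => by ring
  rw [h1]
  calc μ i₀ = μ i₀ * (w ⬝ᵥ w) := by rw [hwv, mul_one]
    _ = ∑ i, μ i₀ * (w i * w i) := by rw [dotProduct, Finset.mul_sum]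
    _ ≤ ∑ i, μ i * (w i * w i) :=
        Finset.sum_le_sum fun i _ => by
          exact mul_le_mul_of_nonneg_right (hi₀ i (Finset.mem_univ i)) (mul_self_nonneg _)
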